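/- For every real number z with |z| < 1/2, the generating series of the Catalan numbers satisfies ∑_{k=0}^∞ catalan k · z^{2k} = 2 / (1 + √(1 − 4z²)). -/

import Mathlib

open Finset

lemma catalan_le_four_pow (n : ℕ) : catalan n ≤ 4 ^ n := by
  calc catalan n ≤ (n + 1) * catalan n := Nat.le_mul_of_pos_left _ n.succ_pos
    _ = n.centralBinom := succ_mul_catalan_eq_centralBinom n
    _ ≤ (2 * n + 1).choose n := Nat.choose_le_choose n (by omega)
    _ ≤ 4 ^ n := Nat.choose_middle_le_pow n

lemma catalan_partial_sum (n : ℕ) :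
    ∑ k ∈ range n, (catalan k : ℝ) * (1 / 4) ^ k
      = 2 - 2 * (Nat.centralBinom n) * (1 / 4) ^ n := by
  induction n with
  | zero => simp
  | succ n ih =>
    rw [Finset.sum_range_succ, ih]
    have h1 : ((n : ℝ) + 1) * catalan n = Nat.centralBinom n := by
      exact_mod_cast succ_mul_catalan_eq_centralBinom n
    have h2 : ((n : ℝ) + 1) * Nat.centralBinom (n + 1)
        = 2 * (2 * n + 1) * Nat.centralBinom n := by
      exact_mod_cast n.succ_mul_centralBinom_succ
    have h4 : ((1 : ℝ) / 4) ^ n ≠ 0 := by positivity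
    have hn1 : ((n : ℝ) + 1) ≠ 0 := by positivity
    rw [pow_succ]
    have key : 4 * (catalan n : ℝ) - 8 * (Nat.centralBinom n) + 2 * (Nat.centralBinom (n+1)) = 0 :=
      mul_left_cancel₀ hn1 (by linear_combination 4*h1 + 2*h2)
    field_simp
    linear_combination ((1/4:ℝ)^n) * key


/-- For |z| < 1/2, the generating series of the Catalan numbers satisfies
∑_{k=0}^∞ catalan k · z^{2k} = 2 / (1 + √(1 − 4z²)). -/
theorem catalan_generating_series (z : ℝ) (hz : |z| < 1 / 2) :
    HasSum (fun k : ℕ => (catalan k : ℝ) * z ^ (2 * k))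
      (2 / (1 + Real.sqrt (1 - 4 * z ^ 2))) := by
  set x : ℝ := z ^ 2 with hxdef
  have hx0 : 0 ≤ x := sq_nonneg z
  have hx : x < 1 / 4 := by
    have h := abs_nonneg z
    nlinarith [sq_abs z]
  set f : ℕ → ℝ := fun k => (catalan k : ℝ) * x ^ k with hfdef
  have hf_nonneg : ∀ k, 0 ≤ f k := fun k => by positivity
  have hf_le : ∀ k, f k ≤ (4 * x) ^ k := by
    intro k
    have h1 : (catalan k : ℝ) ≤ 4 ^ k := by exact_mod_cast catalan_le_four_pow k
    calc f k ≤ (4 : ℝ) ^ k * x ^ k := by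
          apply mul_le_mul_of_nonneg_right h1 (by positivity)
      _ = (4 * x) ^ k := (mul_pow 4 x k).symm
  have hsum : Summable f := by
    apply Summable.of_nonneg_of_le hf_nonneg hf_le
    exact summable_geometric_of_lt_one (by linarith) (by linarith)
  have hnorm : Summable fun k => ‖f k‖ := by
    simpa [Real.norm_of_nonneg (hf_nonneg _)] using hsum
  set S : ℝ := ∑' k, f k with hSdef
  have hS : HasSum f S := hsum.hasSum
  -- bound S ≤ 2
  have hS2 : S ≤ 2 := by
    apply hasSum_le_of_sum_le hS
    intro u
    have hsub : u ⊆ Finset.range (u.sup id + 1) := fun i hi =>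
      Finset.mem_range.mpr (Nat.lt_succ_of_le (Finset.le_sup (f := id) hi))
    calc ∑ i ∈ u, f i ≤ ∑ i ∈ Finset.range (u.sup id + 1), f i :=
          Finset.sum_le_sum_of_subset_of_nonneg hsub (fun i _ _ => hf_nonneg i)
      _ ≤ ∑ i ∈ Finset.range (u.sup id + 1), (catalan i : ℝ) * (1 / 4) ^ i := by
          apply Finset.sum_le_sum
          intro i _
          have : x ^ i ≤ (1 / 4 : ℝ) ^ i := pow_le_pow_left₀ hx0 (by linarith) i
          exact mul_le_mul_of_nonneg_left this (by positivity)
      _ = 2 - 2 * (Nat.centralBinom (u.sup id + 1)) * (1 / 4) ^ (u.sup id + 1) :=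
          catalan_partial_sum _
      _ ≤ 2 := by
          have : (0:ℝ) ≤ 2 * (Nat.centralBinom (u.sup id + 1)) * (1 / 4) ^ (u.sup id + 1) := by
            positivity
          linarith
  -- Cauchy product: quadratic equation
  have hquad : x * S ^ 2 + 1 = S := by
    have hmul : HasSum (fun n => ∑ k ∈ Finset.range (n + 1), f k * f (n - k)) (S * S) := by
      simpa [← hSdef] using hasSum_sum_range_mul_of_summable_norm hnorm hnorm
    have heq : ∀ n, ∑ k ∈ Finset.range (n + 1), f k * f (n - k)
        = (catalan (n + 1) : ℝ) * x ^ n := by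
      intro n
      have : ∀ k ∈ Finset.range (n + 1), f k * f (n - k)
          = ((catalan k * catalan (n - k) : ℕ) : ℝ) * x ^ n := by
        intro k hk
        have hkn : k ≤ n := Nat.lt_succ_iff.mp (Finset.mem_range.mp hk)
        simp only [hfdef]
        push_cast
        rw [mul_mul_mul_comm, ← pow_add, Nat.add_sub_cancel' hkn]
      rw [Finset.sum_congr rfl this, ← Finset.sum_mul, ← Nat.cast_sum]
      congr 2
      rw [catalan_succ']
      rw [← Finset.Nat.sum_antidiagonal_eq_sum_range_succ (fun k l => catalan k * catalan l)]
    rw [funext heq] at hmul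
    have hmul' : HasSum (fun n => f (n + 1)) (x * (S * S)) := by
      have := hmul.mul_left x
      have e : (fun n => f (n + 1)) = fun i => x * ((catalan (i + 1) : ℝ) * x ^ i) := by
        funext n
        simp only [hfdef]
        ring
      rw [e]
      exact this
    have h2 : HasSum (fun n => f (n + 1)) (S - f 0) :=
      (hasSum_nat_add_iff (f := f) 1).mpr (by simpa using hS)
    have huniq := hmul'.unique h2
    have hf0 : f 0 = 1 := by simp [hfdef]
    rw [hf0] at huniq
    nlinarith [huniq]
  -- solve the quadratic
  set s : ℝ := Real.sqrt (1 - 4 * z ^ 2) with hsdef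
  have hs0 : 0 ≤ s := Real.sqrt_nonneg _
  have hs2 : s ^ 2 = 1 - 4 * x := Real.sq_sqrt (by linarith)
  have h1s : (0:ℝ) < 1 + s := by linarith
  set T : ℝ := 2 / (1 + s) with hTdef
  have hT : x * T ^ 2 + 1 = T := by
    rw [hTdef]
    field_simp
    nlinarith [hs2]
  have hT2 : T ≤ 2 := by
    rw [hTdef, div_le_iff₀ h1s]
    nlinarith
  have hfactor : (x * (S + T) - 1) * (S - T) = 0 := by
    linear_combination hquad - hT
  have hST : S = T := by
    rcases mul_eq_zero.mp hfactor with h | h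
    · exfalso
      nlinarith
    · linarith [sub_eq_zero.mp h]
  have : HasSum (fun k : ℕ => (catalan k : ℝ) * x ^ k) T := hST ▸ hS
  simpa [pow_mul] using this
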